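/- Every extremally disconnected Hausdorff space E is projective in the category of Hausdorff spaces and perfect maps: if X and Y are Hausdorff spaces, g : Y → X is a perfect surjective map, and π : E → X is a perfect map, then there exists a perfect map f : E → Y with g ∘ f = π. -/

import Mathlib

open Filter Topology Set

private lemma aux_proper_fst {E X Y : Type*} [TopologicalSpace E] [T2Space E]
    [TopologicalSpace X] [T2Space X] [TopologicalSpace Y] [T2Space Y]
    (g : Y → X) (hg : IsProperMap g) (π : E → X) (hπc : Continuous π)
    {D : Set (E × Y)} (hD : IsClosed D) (hDZ : ∀ p ∈ D, π p.1 = g p.2) :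
    IsProperMap (fun p : D => (p : E × Y).1) := by
  rw [isProperMap_iff_ultrafilter]
  refine ⟨(continuous_fst.comp continuous_subtype_val), fun 𝒰 e he => ?_⟩
  have h1 : Tendsto g (Ultrafilter.map (fun p : D => (p : E × Y).2) 𝒰) (𝓝 (π e)) := by
    rw [Ultrafilter.coe_map, Filter.tendsto_map'_iff]
    have : (g ∘ fun p : D => (p : E × Y).2) = fun p : D => π (p : E × Y).1 := by
      funext p; exact (hDZ p p.2).symm
    rw [this]
    exact (hπc.tendsto e).comp he
  obtain ⟨y, hgy, hy⟩ := hg.ultrafilter_le_nhds_of_tendsto h1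
  rw [Ultrafilter.coe_map] at hy
  have hy' : Tendsto (fun p : D => (p : E × Y).2) 𝒰 (𝓝 y) := hy
  have hval : Tendsto (fun p : D => (p : E × Y)) 𝒰 (𝓝 (e, y)) := by
    rw [nhds_prod_eq]
    exact Tendsto.prodMk he hy'
  have hmem : (e, y) ∈ D := by
    rw [← hD.closure_eq, mem_closure_iff_ultrafilter]
    refine ⟨Ultrafilter.map (fun p : D => (p : E × Y)) 𝒰, ?_, hval⟩
    rw [Ultrafilter.mem_map]
    exact Filter.univ_mem' (fun p => p.2)
  refine ⟨⟨(e, y), hmem⟩, rfl, ?_⟩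
  rw [IsInducing.subtypeVal.nhds_eq_comap, ← Filter.tendsto_iff_comap]
  exact hval

private lemma aux_proper_snd {E X Y : Type*} [TopologicalSpace E] [T2Space E]
    [TopologicalSpace X] [T2Space X] [TopologicalSpace Y] [T2Space Y]
    (g : Y → X) (hgc : Continuous g) (π : E → X) (hπ : IsProperMap π)
    {D : Set (E × Y)} (hD : IsClosed D) (hDZ : ∀ p ∈ D, π p.1 = g p.2) :
    IsProperMap (fun p : D => (p : E × Y).2) := by
  rw [isProperMap_iff_ultrafilter]
  refine ⟨(continuous_snd.comp continuous_subtype_val), fun 𝒰 y hy => ?_⟩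
  have h1 : Tendsto π (Ultrafilter.map (fun p : D => (p : E × Y).1) 𝒰) (𝓝 (g y)) := by
    rw [Ultrafilter.coe_map, Filter.tendsto_map'_iff]
    have : (π ∘ fun p : D => (p : E × Y).1) = fun p : D => g (p : E × Y).2 := by
      funext p; exact hDZ p p.2
    rw [this]
    exact (hgc.tendsto y).comp hy
  obtain ⟨e, hπe, he⟩ := hπ.ultrafilter_le_nhds_of_tendsto h1
  rw [Ultrafilter.coe_map] at he
  have he' : Tendsto (fun p : D => (p : E × Y).1) 𝒰 (𝓝 e) := he
  have hval : Tendsto (fun p : D => (p : E × Y)) 𝒰 (𝓝 (e, y)) := by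
    rw [nhds_prod_eq]
    exact Tendsto.prodMk he' hy
  have hmem : (e, y) ∈ D := by
    rw [← hD.closure_eq, mem_closure_iff_ultrafilter]
    refine ⟨Ultrafilter.map (fun p : D => (p : E × Y)) 𝒰, ?_, hval⟩
    rw [Ultrafilter.mem_map]
    exact Filter.univ_mem' (fun p => p.2)
  refine ⟨⟨(e, y), hmem⟩, rfl, ?_⟩
  rw [IsInducing.subtypeVal.nhds_eq_comap, ← Filter.tendsto_iff_comap]
  exact hval

/-- Every extremally disconnected Hausdorff space is projective in the category
of Hausdorff spaces and perfect maps. -/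
theorem extremallyDisconnected_projective_perfect
    {E X Y : Type*} [TopologicalSpace E] [T2Space E] [ExtremallyDisconnected E]
    [TopologicalSpace X] [T2Space X] [TopologicalSpace Y] [T2Space Y]
    (g : Y → X) (hgc : Continuous g) (hgcl : IsClosedMap g)
    (hgfib : ∀ x : X, IsCompact (g ⁻¹' {x})) (hgsurj : Function.Surjective g)
    (π : E → X) (hπc : Continuous π) (hπcl : IsClosedMap π)
    (hπfib : ∀ x : X, IsCompact (π ⁻¹' {x})) :
    ∃ f : E → Y, Continuous f ∧ IsClosedMap f ∧ (∀ y : Y, IsCompact (f ⁻¹' {y})) ∧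
      g ∘ f = π := by
  have hgp : IsProperMap g :=
    isProperMap_iff_isClosedMap_and_compact_fibers.mpr ⟨hgc, hgcl, hgfib⟩
  have hπp : IsProperMap π :=
    isProperMap_iff_isClosedMap_and_compact_fibers.mpr ⟨hπc, hπcl, hπfib⟩
  -- the pullback
  set Z : Set (E × Y) := {p | π p.1 = g p.2} with hZ
  have hZcl : IsClosed Z := isClosed_eq (hπc.comp continuous_fst) (hgc.comp continuous_snd)
  -- the family of closed subsets of Z mapping onto E
  set S : Set (Set (E × Y)) := {C | IsClosed C ∧ C ⊆ Z ∧ Prod.fst '' C = univ} with hS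
  have hZS : Z ∈ S := by
    refine ⟨hZcl, subset_rfl, ?_⟩
    ext e
    simp only [mem_image, mem_univ, iff_true]
    obtain ⟨y, hy⟩ := hgsurj (π e)
    exact ⟨(e, y), hy.symm, rfl⟩
  -- Zorn's lemma : find a minimal element of S
  obtain ⟨D, hDmin⟩ : ∃ D, Minimal (· ∈ S) D := by
    apply zorn_superset
    intro c hcS hc
    rcases c.eq_empty_or_nonempty with rfl | hne
    · exact ⟨Z, hZS, by simp⟩
    refine ⟨⋂₀ c, ⟨isClosed_sInter fun C hC => (hcS hC).1, ?_, ?_⟩,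
      fun s hs => sInter_subset_of_mem hs⟩
    · obtain ⟨C, hC⟩ := hne
      exact (sInter_subset_of_mem hC).trans (hcS hC).2.1
    · ext e
      simp only [mem_image, mem_univ, iff_true]
      -- intersect each member of the chain with the compact fiber over e
      have hKcpt : IsCompact (({e} : Set E) ×ˢ (g ⁻¹' {π e})) :=
        isCompact_singleton.prod (hgfib (π e))
      have : (⋂ C : c, ((C : Set (E × Y)) ∩ (Prod.fst ⁻¹' {e}))).Nonempty := by
        have : Nonempty c := hne.to_subtype
        apply IsCompact.nonempty_iInter_of_directed_nonempty_isCompact_isClosed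
        · rintro ⟨C₁, h₁⟩ ⟨C₂, h₂⟩
          rcases hc.total h₁ h₂ with h | h
          · exact ⟨⟨C₁, h₁⟩, subset_rfl, inter_subset_inter_left _ h⟩
          · exact ⟨⟨C₂, h₂⟩, inter_subset_inter_left _ h, subset_rfl⟩
        · rintro ⟨C, hC⟩
          have := (hcS hC).2.2
          have he : e ∈ Prod.fst '' C := this ▸ mem_univ e
          obtain ⟨p, hp, hpe⟩ := he
          exact ⟨p, hp, by simpa using hpe⟩
        · rintro ⟨C, hC⟩
          refine hKcpt.of_isClosed_subset
            (((hcS hC).1).inter (isClosed_singleton.preimage continuous_fst)) ?_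
          rintro ⟨pe, py⟩ ⟨hpC, hpe⟩
          have hpZ : π pe = g py := (hcS hC).2.1 hpC
          simp only [mem_preimage, mem_singleton_iff] at hpe
          subst hpe
          exact ⟨rfl, by simpa using hpZ.symm⟩
        · rintro ⟨C, hC⟩
          exact ((hcS hC).1).inter (isClosed_singleton.preimage continuous_fst)
      obtain ⟨p, hp⟩ := this
      simp only [mem_iInter, mem_inter_iff, mem_preimage, mem_singleton_iff] at hp
      refine ⟨p, ?_, (hp ⟨hne.choose, hne.choose_spec⟩).2⟩
      intro C hC
      exact (hp ⟨C, hC⟩).1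
  obtain ⟨⟨hDcl, hDZ, hDsurj⟩, hDle⟩ := hDmin
  have hDZ' : ∀ p ∈ D, π p.1 = g p.2 := fun p hp => hDZ hp
  -- the restriction of fst to D
  set φ : D → E := fun p => (p : E × Y).1 with hφ
  have hφp : IsProperMap φ := aux_proper_fst g hgp π hπc hDcl hDZ'
  have hφc : Continuous φ := hφp.continuous
  have hφcl : IsClosedMap φ := hφp.isClosedMap
  have hφsurj : Function.Surjective φ := by
    intro e
    have he : e ∈ Prod.fst '' D := hDsurj ▸ mem_univ e
    obtain ⟨p, hp, hpe⟩ := he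
    exact ⟨⟨p, hp⟩, hpe⟩
  -- minimality: no proper closed subset of D surjects onto E
  have hkey : ∀ W : Set D, IsOpen W → W.Nonempty → ∃ e, e ∉ φ '' Wᶜ := by
    intro W hWo hWne
    by_contra h
    push_neg at h
    have himg : φ '' Wᶜ = univ := eq_univ_of_forall h
    have hC'S : (Subtype.val '' (Wᶜ : Set D)) ∈ S := by
      refine ⟨(hDcl.isClosedEmbedding_subtypeVal.isClosedMap) _ (hWo.isClosed_compl), ?_, ?_⟩
      · rintro p ⟨q, _, rfl⟩
        exact hDZ q.2
      · rw [← himg]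
        ext e
        simp only [mem_image, hφ]
        constructor
        · rintro ⟨p, ⟨q, hq, rfl⟩, rfl⟩; exact ⟨q, hq, rfl⟩
        · rintro ⟨q, hq, rfl⟩; exact ⟨q, ⟨q, hq, rfl⟩, rfl⟩
    have hsub : (Subtype.val '' (Wᶜ : Set D)) ⊆ D := by
      rintro p ⟨q, _, rfl⟩; exact q.2
    have heq := (hDle hC'S hsub).antisymm hsub
    obtain ⟨w, hw⟩ := hWne
    have : (w : E × Y) ∈ Subtype.val '' (Wᶜ : Set D) := heq ▸ w.2
    obtain ⟨q, hq, hqw⟩ := this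
    have : q = w := Subtype.ext hqw
    exact (this ▸ hq) hw
  -- injectivity of φ
  have hφinj : Function.Injective φ := by
    intro d₁ d₂ hd
    by_contra hne
    obtain ⟨U₁, U₂, hU₁o, hU₂o, hd₁, hd₂, hdisj⟩ := t2_separation hne
    set E₁ : Set E := (φ '' U₁ᶜ)ᶜ with hE₁
    set E₂ : Set E := (φ '' U₂ᶜ)ᶜ with hE₂
    have hE₁o : IsOpen E₁ := (hφcl _ hU₁o.isClosed_compl).isOpen_compl
    have hE₂o : IsOpen E₂ := (hφcl _ hU₂o.isClosed_compl).isOpen_compl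
    have hEdisj : Disjoint E₁ E₂ := by
      rw [Set.disjoint_iff]
      rintro e ⟨he₁, he₂⟩
      obtain ⟨d, rfl⟩ := hφsurj e
      rcases Classical.em (d ∈ U₁) with h1 | h1
      · rcases Classical.em (d ∈ U₂) with h2 | h2
        · exact (Set.disjoint_iff.mp hdisj ⟨h1, h2⟩)
        · exact he₂ ⟨d, h2, rfl⟩
      · exact he₁ ⟨d, h1, rfl⟩
    have hclmem : ∀ (U : Set D), IsOpen U → ∀ d : D, d ∈ U →
        φ d ∈ closure ((φ '' Uᶜ)ᶜ) := by
      intro U hUo d hdU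
      rw [mem_closure_iff]
      intro V hVo hVe
      obtain ⟨e', he'⟩ := hkey (U ∩ φ ⁻¹' V) (hUo.inter (hVo.preimage hφc))
        ⟨d, hdU, hVe⟩
      obtain ⟨d', rfl⟩ := hφsurj e'
      have hd'W : d' ∈ U ∩ φ ⁻¹' V := by
        by_contra h
        exact he' ⟨d', h, rfl⟩
      refine ⟨φ d', hd'W.2, ?_⟩
      intro hmem
      obtain ⟨q, hq, hqe⟩ := hmem
      exact he' ⟨q, fun hqW => hq hqW.1, hqe⟩
    have h1 : φ d₁ ∈ closure E₁ := hclmem U₁ hU₁o d₁ hd₁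
    have h2 : φ d₁ ∈ closure E₂ := hd ▸ hclmem U₂ hU₂o d₂ hd₂
    -- in an extremally disconnected space, disjoint open sets have disjoint closures
    have hop : IsOpen (closure E₁) := ExtremallyDisconnected.open_closure E₁ hE₁o
    have hsub1 : closure E₁ ⊆ E₂ᶜ :=
      closure_minimal (fun x hx hx2 => Set.disjoint_iff.mp hEdisj ⟨hx, hx2⟩)
        hE₂o.isClosed_compl
    have hsub2 : closure E₂ ⊆ (closure E₁)ᶜ :=
      closure_minimal (fun x hx hx1 => hsub1 hx1 hx) hop.isClosed_compl
    exact hsub2 h2 h1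
  -- φ is a homeomorphism
  have hφopen : IsOpenMap φ := by
    intro U hU
    have : φ '' U = (φ '' Uᶜ)ᶜ := by
      ext e
      obtain ⟨d, rfl⟩ := hφsurj e
      simp only [mem_image, mem_compl_iff]
      constructor
      · rintro ⟨q, hq, hqe⟩ ⟨r, hr, hre⟩
        exact hr (hφinj (hre.trans hqe.symm) ▸ hq)
      · intro h
        rcases Classical.em (d ∈ U) with hd | hd
        · exact ⟨d, hd, rfl⟩
        · exact absurd ⟨d, hd, rfl⟩ h
    rw [this]
    exact (hφcl _ hU.isClosed_compl).isOpen_compl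
  let ψ : D ≃ₜ E := (Equiv.ofBijective φ ⟨hφinj, hφsurj⟩).toHomeomorphOfContinuousOpen
    hφc hφopen
  refine ⟨(fun p : D => (p : E × Y).2) ∘ ψ.symm, ?_, ?_, ?_, ?_⟩
  · exact (continuous_snd.comp continuous_subtype_val).comp ψ.symm.continuous
  · exact ((aux_proper_snd g hgc π hπp hDcl hDZ').comp (ψ.symm.isProperMap)).isClosedMap
  · exact fun y => ((aux_proper_snd g hgc π hπp hDcl hDZ').comp
      (ψ.symm.isProperMap)).isCompact_preimage isCompact_singleton
  · funext e
    have h1 : φ (ψ.symm e) = e := ψ.apply_symm_apply e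
    have h2 := hDZ' _ (ψ.symm e).2
    simp only [Function.comp_apply]
    rw [← h2]
    exact congrArg π h1
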